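/- Let λ ∈ ℝ, m ∈ ℕ, and consider on the circle of length L = 2πm/√(1+λ) the test function φ(s) = cos(√(1+λ)·((m+1)/m)·s). Then ∫ φ² ds = ∫ (φ')² / ((1+λ)((m+1)/m)²) ds = mπ/√(1+λ), and the quadratic form Q(φ) = ∫ [2(φ'')² − (6+4λ)(φ')² + (4 + 6λ + 2λ²)φ²] ds evaluates to (2π/√(1+λ)) · (λ+1)(2m+1)(λ(2m+1) − m² + 2m + 1)/m³, which is negative whenever −1 < λ < (m² − 2m − 1)/(2m+1). -/

import Mathlib

open Real

/-- with `L = 2πm/√(1+lam)` and `φ(s) = cos(√(1+lam)·((m+1)/m)·s)`, one has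
`∫ φ² ds = ∫ (φ')²/((1+lam)((m+1)/m)²) ds = mπ/√(1+lam)`, and the second-variation
quadratic form `Q(φ) = ∫ [2(φ'')² − (6+4lam)(φ')² + (4+6lam+2lam²)φ²] ds` equals
`(2π/√(1+lam))·(lam+1)(2m+1)(lam(2m+1) − m² + 2m + 1)/m³`, which is negative whenever
`−1 < lam < (m² − 2m − 1)/(2m+1)`. -/
theorem second_variation_test_function (lam : ℝ) (hlam : -1 < lam) (m : ℕ) (hm : 1 ≤ m) :
    let k : ℝ := Real.sqrt (1 + lam) * (((m : ℝ) + 1) / m)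
    let L : ℝ := 2 * π * m / Real.sqrt (1 + lam)
    let φ : ℝ → ℝ := fun s => Real.cos (k * s)
    let Q : ℝ := ∫ s in (0:ℝ)..L,
      (2 * (deriv (deriv φ) s) ^ 2 - (6 + 4 * lam) * (deriv φ s) ^ 2
        + (4 + 6 * lam + 2 * lam ^ 2) * (φ s) ^ 2)
    (∫ s in (0:ℝ)..L, (φ s) ^ 2) = m * π / Real.sqrt (1 + lam) ∧
    (∫ s in (0:ℝ)..L, (deriv φ s) ^ 2 / ((1 + lam) * (((m : ℝ) + 1) / m) ^ 2))
      = m * π / Real.sqrt (1 + lam) ∧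
    Q = (2 * π / Real.sqrt (1 + lam)) * (lam + 1) * (2 * (m : ℝ) + 1)
          * (lam * (2 * (m : ℝ) + 1) - (m : ℝ) ^ 2 + 2 * m + 1) / (m : ℝ) ^ 3 ∧
    (lam < ((m : ℝ) ^ 2 - 2 * m - 1) / (2 * (m : ℝ) + 1) → Q < 0) := by
  intro k L φ Q
  have hkdef : k = Real.sqrt (1 + lam) * (((m : ℝ) + 1) / m) := rfl
  have hLdef : L = 2 * π * m / Real.sqrt (1 + lam) := rfl
  have hφdef : φ = fun s => Real.cos (k * s) := rfl
  have hQdef : Q = ∫ s in (0:ℝ)..L,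
      (2 * (deriv (deriv φ) s) ^ 2 - (6 + 4 * lam) * (deriv φ s) ^ 2
        + (4 + 6 * lam + 2 * lam ^ 2) * (φ s) ^ 2) := rfl
  have hu : (0:ℝ) < 1 + lam := by linarith
  have hs : (0:ℝ) < Real.sqrt (1 + lam) := Real.sqrt_pos.mpr hu
  have hm0 : (0:ℝ) < (m:ℝ) := by exact_mod_cast Nat.pos_of_ne_zero (by omega)
  have hk : 0 < k := by rw [hkdef]; exact mul_pos hs (div_pos (by linarith) hm0)
  have hk2 : k ^ 2 = (1 + lam) * (((m : ℝ) + 1) / m) ^ 2 := by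
    rw [hkdef, mul_pow, Real.sq_sqrt hu.le]
  have hkL : k * L = 2 * π * ((m:ℝ) + 1) := by
    rw [hkdef, hLdef]; field_simp
  have hsin0 : Real.sin (2 * π * ((m:ℝ)+1)) = 0 := by
    have h : (2 * π * ((m:ℝ)+1)) = (2*(m+1) : ℤ) * π := by push_cast; ring
    rw [h, Real.sin_int_mul_pi]
  have Icc : ∫ s in (0:ℝ)..L, Real.cos (k*s)^2 = (m:ℝ) * π / Real.sqrt (1+lam) := by
    rw [intervalIntegral.integral_comp_mul_left (fun x => Real.cos x ^ 2) hk.ne',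
      mul_zero, hkL, integral_cos_sq, hsin0, hkdef]
    have hm1 : (m:ℝ) + 1 ≠ 0 := by positivity
    simp only [Real.sin_zero, Real.cos_zero, smul_eq_mul]
    field_simp
    ring
  have Iss : ∫ s in (0:ℝ)..L, Real.sin (k*s)^2 = (m:ℝ) * π / Real.sqrt (1+lam) := by
    rw [intervalIntegral.integral_comp_mul_left (fun x => Real.sin x ^ 2) hk.ne',
      mul_zero, hkL, integral_sin_sq, hsin0, hkdef]
    have hm1 : (m:ℝ) + 1 ≠ 0 := by positivity
    simp only [Real.sin_zero, Real.cos_zero, smul_eq_mul]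
    field_simp
    ring
  have hlin : ∀ s : ℝ, HasDerivAt (fun x : ℝ => k * x) k s := fun s => by
    simpa using (hasDerivAt_id s).const_mul k
  have hd1 : deriv φ = fun s => -k * Real.sin (k * s) := by
    funext s
    rw [hφdef, (hlin s).cos.deriv]; ring
  have hd2 : deriv (deriv φ) = fun s => -k^2 * Real.cos (k * s) := by
    rw [hd1]
    funext s
    rw [(((hlin s).sin).const_mul (-k)).deriv]; ring
  have hQval : Q = (2 * π / Real.sqrt (1 + lam)) * (lam + 1) * (2 * (m : ℝ) + 1)
        * (lam * (2 * (m : ℝ) + 1) - (m : ℝ) ^ 2 + 2 * m + 1) / (m : ℝ) ^ 3 := by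
    have hQ : Q = (2*k^4 + (4+6*lam+2*lam^2)) * ((m:ℝ) * π / Real.sqrt (1+lam))
        + (-(6+4*lam)*k^2) * ((m:ℝ) * π / Real.sqrt (1+lam)) := by
      rw [hQdef]
      have hcong : ∀ s ∈ Set.uIcc (0:ℝ) L,
          (2 * (deriv (deriv φ) s) ^ 2 - (6 + 4 * lam) * (deriv φ s) ^ 2
            + (4 + 6 * lam + 2 * lam ^ 2) * (φ s) ^ 2)
          = (2*k^4 + (4+6*lam+2*lam^2)) * Real.cos (k*s)^2
            + (-(6+4*lam)*k^2) * Real.sin (k*s)^2 := by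
        intro s _
        rw [hd2, hd1]; simp only [hφdef]; ring
      rw [intervalIntegral.integral_congr hcong,
        intervalIntegral.integral_add
          ((Continuous.intervalIntegrable (by fun_prop) 0 L :
            IntervalIntegrable (fun x => (2*k^4 + (4+6*lam+2*lam^2)) * Real.cos (k*x)^2) _ 0 L))
          ((Continuous.intervalIntegrable (by fun_prop) 0 L :
            IntervalIntegrable (fun x => (-(6+4*lam)*k^2) * Real.sin (k*x)^2) _ 0 L)),
        intervalIntegral.integral_const_mul, intervalIntegral.integral_const_mul,
        Icc, Iss]
    have hk4 : k ^ 4 = ((1 + lam) * (((m : ℝ) + 1) / m) ^ 2)^2 := by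
      rw [← hk2]; ring
    rw [hQ, hk4, hk2]
    field_simp
    ring
  refine ⟨by rw [hφdef]; exact Icc, ?_, hQval, ?_⟩
  · have heq : ∀ s : ℝ, (deriv φ s) ^ 2 / ((1 + lam) * (((m : ℝ) + 1) / m) ^ 2)
        = Real.sin (k*s)^2 := by
      intro s
      rw [hd1, ← hk2]
      have hk2ne : k ^ 2 ≠ 0 := pow_ne_zero 2 hk.ne'
      field_simp
    rw [intervalIntegral.integral_congr (fun s _ => heq s), Iss]
  · intro hlt
    have h2m : (0:ℝ) < 2 * (m:ℝ) + 1 := by linarith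
    have hD : lam * (2 * (m:ℝ) + 1) - (m:ℝ)^2 + 2*m + 1 < 0 := by
      have := (lt_div_iff₀ h2m).mp hlt
      nlinarith
    rw [hQval]
    apply div_neg_of_neg_of_pos
    · exact mul_neg_of_pos_of_neg
        (mul_pos (mul_pos (div_pos (by positivity) hs) (by linarith)) h2m) hD
    · exact pow_pos hm0 3
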